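/- arXiv:1911.03608 — 9 statements merged into one kernel-verified Lean document; each statement's English description precedes it below -/
import Mathlib

section
/- For all quaternions a, b and all unit quaternions p, q (‖p‖ = ‖q‖ = 1): ‖p a q̄‖ = ‖a‖, ‖p b q̄‖ = ‖b‖, and moreover 2·(p a q̄)·conj(p b q̄) = p·(2 a b̄)·p̄ and 2·conj(p a q̄)·(p b q̄) = q·(2 ā b)·q̄. Equivalently, h(p a q̄, p b q̄) has the same first component as h(a,b) and second component conjugated by p, while h̃(p a q̄, p b q̄) has the same first component as h̃(a,b) and second component conjugated by q. -/
/-- Equivariance of the Hopf-type maps under the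
`S³ × S³`-action `(a,b) ↦ (p a q̄, p b q̄)`: norms are preserved, the second
component of `h` is conjugated by `p`, and the second component of `h̃` is
conjugated by `q`. -/
theorem hopf_maps_equivariance (a b p q : Quaternion ℝ)
    (hp : ‖p‖ = 1) (hq : ‖q‖ = 1) :
    ‖p * a * star q‖ = ‖a‖ ∧
    ‖p * b * star q‖ = ‖b‖ ∧
    2 * ((p * a * star q) * star (p * b * star q)) = p * (2 * (a * star b)) * star p ∧
    2 * (star (p * a * star q) * (p * b * star q)) = q * (2 * (star a * b)) * star q := by
  have hq1 : star q * q = 1 := by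
    rw [Quaternion.star_mul_self, Quaternion.normSq_eq_norm_mul_self, hq]
    norm_num
  have hp1 : star p * p = 1 := by
    rw [Quaternion.star_mul_self, Quaternion.normSq_eq_norm_mul_self, hp]
    norm_num
  refine ⟨by simp [norm_mul, hp, hq], by simp [norm_mul, hp, hq], ?_, ?_⟩
  · have h1 : star (p * b * star q) = q * star b * star p := by
      simp [mul_assoc]
    rw [h1]
    calc 2 * (p * a * star q * (q * star b * star p))
        = 2 * (p * a * ((star q * q) * (star b * star p))) := by
          simp only [mul_assoc]
      _ = p * (2 * (a * star b)) * star p := by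
          rw [hq1]; simp only [one_mul, mul_assoc, two_mul]; noncomm_ring
  · have h1 : star (p * a * star q) = q * star a * star p := by
      simp [mul_assoc]
    rw [h1]
    calc 2 * (q * star a * star p * (p * b * star q))
        = 2 * (q * star a * ((star p * p) * (b * star q))) := by
          simp only [mul_assoc]
      _ = q * (2 * (star a * b)) * star q := by
          rw [hp1]; simp only [one_mul, mul_assoc, two_mul]; noncomm_ring
end

section
/- Let a, b, a', b' be quaternions with ‖a‖² + ‖b‖² = 1 and ‖a'‖² + ‖b'‖² = 1. Then h(a,b) = h(a',b') (i.e. ‖a‖² − ‖b‖² = ‖a'‖² − ‖b'‖² and a·b̄ = a'·conj(b')) if and only if there exists a unit quaternion q (‖q‖ = 1) with a' = a·q and b' = b·q. In other words, the fibers of the Hopf map h : S⁷ → S⁴ are exactly the orbits of the diagonal right multiplication action of the unit quaternions S³ on S⁷. -/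
/-- The fibers of the Hopf map `h : S⁷ → S⁴` are exactly the
orbits of the diagonal right multiplication action of the unit quaternions
`S³` on `S⁷`. -/
theorem hopf_fibers_are_orbits (a b a' b' : Quaternion ℝ)
    (hab : ‖a‖ ^ 2 + ‖b‖ ^ 2 = 1) (hab' : ‖a'‖ ^ 2 + ‖b'‖ ^ 2 = 1) :
    (‖a‖ ^ 2 - ‖b‖ ^ 2 = ‖a'‖ ^ 2 - ‖b'‖ ^ 2 ∧ a * star b = a' * star b') ↔
    ∃ q : Quaternion ℝ, ‖q‖ = 1 ∧ a' = a * q ∧ b' = b * q := by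
  constructor
  · rintro ⟨h1, h2⟩
    have key : ∀ x y : Quaternion ℝ, ‖x‖ ^ 2 = ‖y‖ ^ 2 → ‖x‖ = ‖y‖ := by
      intro x y h
      have := congrArg Real.sqrt h
      simpa [Real.sqrt_sq (norm_nonneg _)] using this
    have hna : ‖a‖ = ‖a'‖ := key _ _ (by linarith)
    have hnb : ‖b‖ = ‖b'‖ := key _ _ (by linarith)
    by_cases hb : b = 0
    · have hb' : b' = 0 := by
        have : ‖b'‖ = 0 := by rw [← hnb, hb, norm_zero]
        exact norm_eq_zero.mp this
      have hna1 : ‖a‖ = 1 := by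
        rw [hb, norm_zero] at hab
        have h1 : ‖a‖ ^ 2 = 1 := by nlinarith
        nlinarith [norm_nonneg a]
      refine ⟨star a * a', ?_, ?_, ?_⟩
      · rw [norm_mul, norm_star, hna1, ← hna, hna1]; norm_num
      · rw [← mul_assoc, Quaternion.self_mul_star,
          Quaternion.normSq_eq_norm_mul_self, hna1]
        simp
      · simp [hb, hb']
    · have hb2 : Quaternion.normSq b ≠ 0 := by
        simpa [Quaternion.normSq_eq_zero] using hb
    -- q = (normSq b)⁻¹ • (star b * b')
      refine ⟨(Quaternion.normSq b)⁻¹ • (star b * b'), ?_, ?_, ?_⟩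
      · rw [norm_smul, norm_mul, norm_star, Quaternion.normSq_eq_norm_mul_self, ← hnb]
        rw [Real.norm_eq_abs, abs_inv, abs_of_nonneg (by positivity)]
        have hb0 : ‖b‖ ≠ 0 := norm_ne_zero_iff.mpr hb
        field_simp
      · rw [mul_smul_comm, ← mul_assoc, h2, mul_assoc, Quaternion.star_mul_self,
          Quaternion.mul_coe_eq_smul, smul_smul,
          Quaternion.normSq_eq_norm_mul_self, Quaternion.normSq_eq_norm_mul_self, hnb]
        rw [inv_mul_cancel₀ (by simpa [Quaternion.normSq_eq_norm_mul_self, hnb] using hb2),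
          one_smul]
      · rw [mul_smul_comm, ← mul_assoc, Quaternion.self_mul_star,
          Quaternion.coe_mul_eq_smul, smul_smul, inv_mul_cancel₀ hb2, one_smul]
  · rintro ⟨q, hq, rfl, rfl⟩
    have hqq : q * star q = ((1 : ℝ) : Quaternion ℝ) := by
      rw [Quaternion.self_mul_star, Quaternion.normSq_eq_norm_mul_self, hq, one_mul]
    constructor
    · simp [norm_mul, hq]
    · rw [star_mul, ← mul_assoc, mul_assoc a, hqq]
      simp
end

section
/- Let a, b, c, d be quaternions with ‖a‖² + ‖b‖² = 1 and ‖c‖² + ‖d‖² = 1. Then ā·c + b̄·d = 0 if and only if both ‖a‖² − ‖b‖² = −(‖c‖² − ‖d‖²) and 2·a·b̄ = −(2·c·d̄). Equivalently: the pair of orthonormal columns ((a,b),(c,d)) lies in the quaternionic unitary group Sp(2) if and only if h(a,b) = α(h(c,d)), where α is the antipodal map. This identifies Sp(2) with {(u₁,u₂) ∈ S⁷×S⁷ : h(u₁) = α h(u₂)}. -/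
open Quaternion

private lemma coe_normSq_eq (a : Quaternion ℝ) :
    ((normSq a : ℝ) : Quaternion ℝ) = ((‖a‖ ^ 2 : ℝ) : Quaternion ℝ) := by
  rw [normSq_eq_norm_mul_self, sq]

private lemma coe_left (r : ℝ) (x y : Quaternion ℝ) :
    x * (y * (r : Quaternion ℝ)) = (r : Quaternion ℝ) * (x * y) := by
  rw [Quaternion.mul_coe_eq_smul, mul_smul_comm, Quaternion.coe_mul_eq_smul]

private lemma cancel_aux (a d x y : Quaternion ℝ) (hne : a ≠ 0)
    (hsq : (‖a‖ : ℝ) ^ 2 = ‖d‖ ^ 2)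
    (h : ((‖a‖ ^ 2 : ℝ) : Quaternion ℝ) * x = -(((‖d‖ ^ 2 : ℝ) : Quaternion ℝ) * y)) :
    x = -y := by
  have hD : ((‖d‖ ^ 2 : ℝ) : Quaternion ℝ) = ((‖a‖ ^ 2 : ℝ) : Quaternion ℝ) := by rw [hsq]
  rw [hD] at h
  have hz : ((‖a‖ ^ 2 : ℝ) : Quaternion ℝ) * (x + y) = 0 := by
    rw [mul_add, h, neg_add_cancel]
  have h0 : ((‖a‖ ^ 2 : ℝ) : Quaternion ℝ) ≠ 0 := by
    have hr : (‖a‖ ^ 2 : ℝ) ≠ 0 := pow_ne_zero 2 (norm_ne_zero_iff.mpr hne)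
    exact fun hh => hr (Quaternion.coe_injective (by simpa using hh))
  have := (mul_eq_zero.mp hz).resolve_left h0
  exact eq_neg_of_add_eq_zero_left this

/-- A pair of unit columns `((a,b),(c,d))` is orthonormal
(i.e. lies in `Sp(2)`) if and only if `h(a,b) = α(h(c,d))`, where `α` is the
antipodal map of `ℝ × ℍ`.  This identifies `Sp(2)` with
`{(u₁,u₂) ∈ S⁷×S⁷ : h(u₁) = α h(u₂)}`. -/
theorem sp2_iff_hopf_antipodal (a b c d : Quaternion ℝ)
    (hab : ‖a‖ ^ 2 + ‖b‖ ^ 2 = 1) (hcd : ‖c‖ ^ 2 + ‖d‖ ^ 2 = 1) :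
    star a * c + star b * d = 0 ↔
      (‖a‖ ^ 2 - ‖b‖ ^ 2 = -(‖c‖ ^ 2 - ‖d‖ ^ 2) ∧
       2 * (a * star b) = -(2 * (c * star d))) := by
  constructor
  · intro h
    have h1 : star a * c = -(star b * d) := by
      rw [eq_neg_iff_add_eq_zero]; exact h
    have hn : ‖a‖ * ‖c‖ = ‖b‖ * ‖d‖ := by
      have := congrArg norm h1
      simpa [norm_mul, norm_star, norm_neg] using this
    have hn2 : ‖a‖ ^ 2 * ‖c‖ ^ 2 = ‖b‖ ^ 2 * ‖d‖ ^ 2 := by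
      rw [← mul_pow, ← mul_pow, hn]
    have had : ‖a‖ ^ 2 = ‖d‖ ^ 2 := by nlinarith [hn2]
    refine ⟨by nlinarith, ?_⟩
    by_cases ha : a = 0
    · have hd : d = 0 := by
        have : ‖d‖ ^ 2 = 0 := by rw [← had, ha]; simp
        simpa [pow_eq_zero_iff, norm_eq_zero] using this
      simp [ha, hd]
    · have key : ((‖a‖ ^ 2 : ℝ) : Quaternion ℝ) * (c * star d)
          = -(((‖d‖ ^ 2 : ℝ) : Quaternion ℝ) * (a * star b)) := by
        have e := congrArg (fun x => a * x * star d) h1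
        simp only [mul_neg, neg_mul] at e
        calc ((‖a‖ ^ 2 : ℝ) : Quaternion ℝ) * (c * star d)
            = a * (star a * c) * star d := by
              rw [← coe_normSq_eq, ← mul_assoc, ← mul_assoc, self_mul_star]
          _ = -(a * (star b * d) * star d) := e
          _ = -(((‖d‖ ^ 2 : ℝ) : Quaternion ℝ) * (a * star b)) := by
              rw [mul_assoc, mul_assoc, self_mul_star, coe_normSq_eq, coe_left]
      have hmain := cancel_aux a d (c * star d) (a * star b) ha had key
      rw [hmain, mul_neg, neg_neg]
  · rintro ⟨h1, h2⟩
    have had : ‖a‖ ^ 2 = ‖d‖ ^ 2 := by nlinarith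
    have h2' : a * star b = -(c * star d) := by
      have h20 : (2 : Quaternion ℝ) ≠ 0 := by
        intro hh
        have hh2 : ((2 : ℝ) : Quaternion ℝ) = ((0 : ℝ) : Quaternion ℝ) := by
          push_cast
          exact hh
        have := Quaternion.coe_injective hh2
        norm_num at this
      have hz : (2 : Quaternion ℝ) * (a * star b + c * star d) = 0 := by
        rw [mul_add, h2, neg_add_cancel]
      have := (mul_eq_zero.mp hz).resolve_left h20
      rw [eq_neg_iff_add_eq_zero]; exact this
    by_cases ha : a = 0
    · have hd : d = 0 := by
        have : ‖d‖ ^ 2 = 0 := by rw [← had, ha]; simp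
        simpa [pow_eq_zero_iff, norm_eq_zero] using this
      simp [ha, hd]
    · have key : ((‖a‖ ^ 2 : ℝ) : Quaternion ℝ) * (star b * d)
          = -(((‖d‖ ^ 2 : ℝ) : Quaternion ℝ) * (star a * c)) := by
        have e := congrArg (fun x => star a * x * d) h2'
        simp only [mul_neg, neg_mul] at e
        calc ((‖a‖ ^ 2 : ℝ) : Quaternion ℝ) * (star b * d)
            = star a * (a * star b) * d := by
              rw [← coe_normSq_eq, ← mul_assoc, ← mul_assoc, star_mul_self]
          _ = -(star a * (c * star d) * d) := e
          _ = -(((‖d‖ ^ 2 : ℝ) : Quaternion ℝ) * (star a * c)) := by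
              rw [mul_assoc, mul_assoc, star_mul_self, coe_normSq_eq, coe_left]
      have hmain := cancel_aux a d (star b * d) (star a * c) ha had key
      rw [hmain, add_neg_cancel]
end

section
/- Two elements of Sp(2) with the same first column differ by a unique right multiplication of the second column by a unit quaternion: if ((a,b),(c,d)) ∈ Sp(2) and ((a,b),(c',d')) ∈ Sp(2), then there exists a unique quaternion q with ‖q‖ = 1, c' = c·q and d' = d·q. In other words, the fibers of the first-column projection pr₁ : Sp(2) → S⁷ are exactly the orbits of the free right S³-action on the second column. -/
/-- Two elements of `Sp(2)` with the same first column differ by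
a unique right multiplication of the second column by a unit quaternion: the
fibers of `pr₁ : Sp(2) → S⁷` are exactly the orbits of the free right
`S³`-action on the second column. -/
theorem sp2_fiber_unique_unit_quaternion (a b c d c' d' : Quaternion ℝ)
    (hab : ‖a‖ ^ 2 + ‖b‖ ^ 2 = 1)
    (hcd : ‖c‖ ^ 2 + ‖d‖ ^ 2 = 1) (hcd' : ‖c'‖ ^ 2 + ‖d'‖ ^ 2 = 1)
    (horth : star a * c + star b * d = 0)
    (horth' : star a * c' + star b * d' = 0) :
    ∃! q : Quaternion ℝ, ‖q‖ = 1 ∧ c' = c * q ∧ d' = d * q := by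
  have hne : c ≠ 0 ∨ d ≠ 0 := by
    by_contra h
    push_neg at h
    rw [h.1, h.2] at hcd
    simp at hcd
  obtain ⟨q, hq2, hq3⟩ : ∃ q : Quaternion ℝ, c' = c * q ∧ d' = d * q := by
    by_cases hd : d = 0
    · have hc : c ≠ 0 := hne.resolve_right (by simp [hd])
      have ha : a = 0 := by
        by_contra ha
        have h0 : star a * c = 0 := by
          have := horth
          rw [hd, mul_zero, add_zero] at this
          exact this
        rcases mul_eq_zero.mp h0 with h | h
        · exact ha (star_eq_zero.mp h)
        · exact hc h
      have hb : b ≠ 0 := by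
        intro hb
        rw [ha, hb] at hab
        simp at hab
      have hd' : d' = 0 := by
        have h0 : star b * d' = 0 := by
          have := horth'
          rw [ha, star_zero, zero_mul, zero_add] at this
          exact this
        rcases mul_eq_zero.mp h0 with h | h
        · exact absurd (star_eq_zero.mp h) hb
        · exact h
      exact ⟨c⁻¹ * c', (mul_inv_cancel_left₀ hc c').symm, by simp [hd, hd']⟩
    · have ha : a ≠ 0 := by
        intro ha
        have hb : b ≠ 0 := by
          intro hb
          rw [ha, hb] at hab
          simp at hab
        have h0 : star b * d = 0 := by
          have := horth
          rw [ha, star_zero, zero_mul, zero_add] at this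
          exact this
        rcases mul_eq_zero.mp h0 with h | h
        · exact hb (star_eq_zero.mp h)
        · exact hd h
      have hsa : (star a : Quaternion ℝ) ≠ 0 := star_ne_zero.mpr ha
      have hc : c = -((star a)⁻¹ * (star b * d)) := by
        have h1 : star a * c = -(star b * d) := by
          rw [eq_neg_iff_add_eq_zero]; exact horth
        rw [← inv_mul_cancel_left₀ hsa c, h1, mul_neg]
      have hc' : c' = -((star a)⁻¹ * (star b * d')) := by
        have h1 : star a * c' = -(star b * d') := by
          rw [eq_neg_iff_add_eq_zero]; exact horth'
        rw [← inv_mul_cancel_left₀ hsa c', h1, mul_neg]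
      refine ⟨d⁻¹ * d', ?_, (mul_inv_cancel_left₀ hd d').symm⟩
      rw [hc, hc', neg_mul, mul_assoc, mul_assoc, mul_inv_cancel_left₀ hd]
  have hq1 : ‖q‖ = 1 := by
    have h : ‖q‖ ^ 2 = 1 := by
      rw [hq2, hq3, norm_mul, norm_mul, mul_pow, mul_pow] at hcd'
      nlinarith [hcd, hcd']
    nlinarith [norm_nonneg q]
  refine ⟨q, ⟨hq1, hq2, hq3⟩, ?_⟩
  rintro r ⟨hr1, hr2, hr3⟩
  rcases hne with hc | hd
  · exact mul_left_cancel₀ hc (by rw [← hr2, hq2])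
  · exact mul_left_cancel₀ hd (by rw [← hr3, hq3])
end

section
/- The Gromoll–Meyer ⋆-action preserves Sp(2) and is free: for every unit quaternion q and every ((a,b),(c,d)) ∈ Sp(2), the element ((q a q̄, q b q̄),(q c, q d)) again lies in Sp(2) (that is, ‖q a q̄‖² + ‖q b q̄‖² = 1, ‖q c‖² + ‖q d‖² = 1 and conj(q a q̄)·(q c) + conj(q b q̄)·(q d) = 0); moreover, if (q a q̄, q b q̄, q c, q d) = (a, b, c, d) then q = 1. -/
/-- The Gromoll–Meyer ⋆-action
`q ⋆ ((a,b),(c,d)) = ((q a q̄, q b q̄),(q c, q d))` preserves `Sp(2)` and is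
free. -/
theorem gromoll_meyer_star_action (q a b c d : Quaternion ℝ)
    (hq : ‖q‖ = 1)
    (hab : ‖a‖ ^ 2 + ‖b‖ ^ 2 = 1) (hcd : ‖c‖ ^ 2 + ‖d‖ ^ 2 = 1)
    (horth : star a * c + star b * d = 0) :
    (‖q * a * star q‖ ^ 2 + ‖q * b * star q‖ ^ 2 = 1 ∧
     ‖q * c‖ ^ 2 + ‖q * d‖ ^ 2 = 1 ∧
     star (q * a * star q) * (q * c) + star (q * b * star q) * (q * d) = 0) ∧
    ((q * a * star q = a ∧ q * b * star q = b ∧ q * c = c ∧ q * d = d) → q = 1) := by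
  have hn : Quaternion.normSq q = 1 := by
    rw [Quaternion.normSq_eq_norm_mul_self, hq]; norm_num
  have hsq : star q * q = 1 := by
    rw [Quaternion.star_mul_self, hn]; norm_cast
  refine ⟨⟨?_, ?_, ?_⟩, ?_⟩
  · simp only [norm_mul, Quaternion.norm_star, hq, one_mul, mul_one]
    exact hab
  · simp only [norm_mul, hq, one_mul]
    exact hcd
  · have key : ∀ x y : Quaternion ℝ,
        star (q * x * star q) * (q * y) = q * (star x * y) := by
      intro x y
      calc star (q * x * star q) * (q * y)
          = q * star x * (star q * q) * y := by
            simp [mul_assoc, StarMul.star_mul]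
        _ = q * (star x * y) := by rw [hsq]; simp [mul_assoc]
    rw [key, key, ← mul_add, horth, mul_zero]
  · rintro ⟨-, -, hc, hd⟩
    have hne : c ≠ 0 ∨ d ≠ 0 := by
      by_contra h
      push_neg at h
      rw [h.1, h.2] at hcd
      simp at hcd
    rcases hne with h | h
    · have : (q - 1) * c = 0 := by rw [sub_mul, one_mul, hc, sub_self]
      rcases mul_eq_zero.mp this with h' | h'
      · exact sub_eq_zero.mp h'
      · exact absurd h' h
    · have : (q - 1) * d = 0 := by rw [sub_mul, one_mul, hd, sub_self]
      rcases mul_eq_zero.mp this with h' | h'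
      · exact sub_eq_zero.mp h'
      · exact absurd h' h
end

section
/- Equivalent description of Sp(2,m): let m ≥ 3 and let u₁, …, u_m ∈ S⁷ ⊂ ℍ×ℍ. Then the conditions h(u₁) = α h(u₂) and h̃(u_i) = α h(u_{i+1}) for all 2 ≤ i ≤ m−1 hold if and only if (u₁, u₂) ∈ Sp(2) and (k(u_i), u_{i+1}) ∈ Sp(2) for all 2 ≤ i ≤ m−1. Hence Sp(2,m) = {(u₁,…,u_m) ∈ (S⁷)^m : (u₁,u₂), (k u₂, u₃), …, (k u_{m−1}, u_m) ∈ Sp(2)}. -/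
/-- The Hopf-type map `h(a,b) = (‖a‖²−‖b‖², 2 a b̄)`. -/
noncomputable def hopfH (u : Quaternion ℝ × Quaternion ℝ) : ℝ × Quaternion ℝ :=
  (‖u.1‖ ^ 2 - ‖u.2‖ ^ 2, 2 * (u.1 * star u.2))

/-- The Hopf-type map `h̃(a,b) = (‖a‖²−‖b‖², 2 ā b)`. -/
noncomputable def hopfHt (u : Quaternion ℝ × Quaternion ℝ) : ℝ × Quaternion ℝ :=
  (‖u.1‖ ^ 2 - ‖u.2‖ ^ 2, 2 * (star u.1 * u.2))

/-- The antipodal map of `ℝ × ℍ`. -/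
def antipodal (x : ℝ × Quaternion ℝ) : ℝ × Quaternion ℝ := (-x.1, -x.2)

/-- Componentwise quaternionic conjugation `k(a,b) = (ā, b̄)`. -/
def kConj (u : Quaternion ℝ × Quaternion ℝ) : Quaternion ℝ × Quaternion ℝ :=
  (star u.1, star u.2)

/-- `Sp(2)` as the set of pairs of orthonormal columns in `S⁷ × S⁷`. -/
def Sp2Set : Set ((Quaternion ℝ × Quaternion ℝ) × (Quaternion ℝ × Quaternion ℝ)) :=
  {P | ‖P.1.1‖ ^ 2 + ‖P.1.2‖ ^ 2 = 1 ∧ ‖P.2.1‖ ^ 2 + ‖P.2.2‖ ^ 2 = 1 ∧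
       star P.1.1 * P.2.1 + star P.1.2 * P.2.2 = 0}

namespace Sp2mAux

open Quaternion

lemma normSq_eq (a : Quaternion ℝ) : (normSq a : ℝ) = ‖a‖ ^ 2 := by
  rw [normSq_eq_norm_mul_self, sq]

/-- The key pointwise algebraic lemma. -/
lemma key (a b c d : Quaternion ℝ) (hab : ‖a‖ ^ 2 + ‖b‖ ^ 2 = 1)
    (hcd : ‖c‖ ^ 2 + ‖d‖ ^ 2 = 1) :
    ((‖a‖ ^ 2 - ‖b‖ ^ 2 : ℝ) = -(‖c‖ ^ 2 - ‖d‖ ^ 2) ∧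
      2 * (a * star b) = -(2 * (c * star d))) ↔ star a * c + star b * d = 0 := by
  constructor
  · rintro ⟨h1, h2⟩
    have h2' : a * star b = -(c * star d) := by
      apply mul_left_cancel₀ (show (2:Quaternion ℝ) ≠ 0 by
        intro h0
        have h1 := congrArg QuaternionAlgebra.re h0
        have : ((2:ℕ) : Quaternion ℝ).re = ((0:ℕ) : Quaternion ℝ).re := by
          norm_num at h1 ⊢; exact_mod_cast h1
        rw [re_natCast, re_natCast] at this
        norm_num at this)
      rw [h2, mul_neg]
    have hda : ‖d‖ ^ 2 = ‖a‖ ^ 2 := by linarith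
    by_cases hd : d = 0
    · have ha : a = 0 := by
        have : ‖a‖ ^ 2 = 0 := by simp [hd] at hda; linarith [hda]
        simpa using (pow_eq_zero_iff (n := 2) (by norm_num)).1
          (by simpa using this)
      simp [ha, hd]
    · have e1 : c * star d = -(a * star b) := by rw [h2', neg_neg]
      have e2 : star a * (c * star d) * d = star a * (-(a * star b)) * d := by rw [e1]
      have e3 : (star a * c) * ((normSq d : ℝ) : Quaternion ℝ)
          = -(((normSq a : ℝ) : Quaternion ℝ) * (star b * d)) := by
        calc (star a * c) * ((normSq d : ℝ) : Quaternion ℝ)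
            = star a * (c * star d) * d := by
              rw [← star_mul_self d]; noncomm_ring
          _ = star a * (-(a * star b)) * d := e2
          _ = -((star a * a) * (star b * d)) := by noncomm_ring
          _ = -(((normSq a : ℝ) : Quaternion ℝ) * (star b * d)) := by
              rw [star_mul_self]
      have hnsq : (normSq a : ℝ) = (normSq d : ℝ) := by
        rw [normSq_eq, normSq_eq]; linarith
      have e4 : (star a * c + star b * d) * ((normSq d : ℝ) : Quaternion ℝ) = 0 := by
        have : ((normSq a : ℝ) : Quaternion ℝ) * (star b * d)
            = (star b * d) * ((normSq d : ℝ) : Quaternion ℝ) := by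
          rw [hnsq, coe_commutes]
        rw [add_mul, e3, this]; exact neg_add_cancel _
      have hdn : ((normSq d : ℝ) : Quaternion ℝ) ≠ 0 := by
        intro h0
        exact hd (normSq_eq_zero.1 (coe_injective (by simpa using h0)))
      rcases mul_eq_zero.1 e4 with h | h
      · exact h
      · exact absurd h hdn
  · intro h
    have h' : star a * c = -(star b * d) := by
      rw [← eq_neg_iff_add_eq_zero] at h; exact h
    have hn : ‖a‖ * ‖c‖ = ‖b‖ * ‖d‖ := by
      have := congrArg norm h'
      simpa [norm_mul, Quaternion.norm_star] using this
    have hn2 : ‖a‖ ^ 2 * ‖c‖ ^ 2 = ‖b‖ ^ 2 * ‖d‖ ^ 2 := by rw [← mul_pow, ← mul_pow, hn]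
    have hcb : ‖c‖ ^ 2 = ‖b‖ ^ 2 := by nlinarith [hn2, hab, hcd]
    have hda : ‖d‖ ^ 2 = ‖a‖ ^ 2 := by linarith
    refine ⟨by linarith, ?_⟩
    have goal2 : a * star b = -(c * star d) := by
      by_cases ha : a = 0
      · have hbd : star b * d = 0 := by
          have := h'
          simpa [ha] using this.symm
        have hb : b ≠ 0 := by
          intro hb
          rw [ha, hb] at hab; simp at hab
        have hd : d = 0 := by
          rcases mul_eq_zero.1 hbd with h0 | h0
          · exact absurd h0 (star_ne_zero.2 hb)
          · exact h0
        simp [ha, hd]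
      · have e2 : a * (star a * c) * star d = a * (-(star b * d)) * star d := by rw [h']
        have e3 : ((normSq a : ℝ) : Quaternion ℝ) * (c * star d)
            = -((a * star b) * ((normSq d : ℝ) : Quaternion ℝ)) := by
          calc ((normSq a : ℝ) : Quaternion ℝ) * (c * star d)
              = a * (star a * c) * star d := by
                rw [← self_mul_star a]; noncomm_ring
            _ = a * (-(star b * d)) * star d := e2
            _ = -((a * star b) * (d * star d)) := by noncomm_ring
            _ = -((a * star b) * ((normSq d : ℝ) : Quaternion ℝ)) := by
                rw [self_mul_star]
        have hnsq : (normSq a : ℝ) = (normSq d : ℝ) := by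
          rw [normSq_eq, normSq_eq]; linarith
        have e4 : (c * star d + a * star b) * ((normSq a : ℝ) : Quaternion ℝ) = 0 := by
          have h5 : ((normSq a : ℝ) : Quaternion ℝ) * (c * star d)
              = (c * star d) * ((normSq a : ℝ) : Quaternion ℝ) := coe_commutes _ _
          have h6 : (a * star b) * ((normSq d : ℝ) : Quaternion ℝ)
              = (a * star b) * ((normSq a : ℝ) : Quaternion ℝ) := by rw [hnsq]
          rw [add_mul, ← h5, e3, h6]; exact neg_add_cancel _
        have han : ((normSq a : ℝ) : Quaternion ℝ) ≠ 0 := by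
          intro h0
          exact ha (normSq_eq_zero.1 (coe_injective (by simpa using h0)))
        rcases mul_eq_zero.1 e4 with h0 | h0
        · have : c * star d = -(a * star b) := by
            rw [← eq_neg_iff_add_eq_zero] at h0; exact h0
          rw [this, neg_neg]
        · exact absurd h0 han
    rw [goal2, mul_neg]

/-- The pairwise form of the equivalence. -/
lemma main_pair (x y : Quaternion ℝ × Quaternion ℝ)
    (hx : ‖x.1‖ ^ 2 + ‖x.2‖ ^ 2 = 1) (hy : ‖y.1‖ ^ 2 + ‖y.2‖ ^ 2 = 1) :
    hopfH x = antipodal (hopfH y) ↔ (x, y) ∈ Sp2Set := by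
  have hk := key x.1 x.2 y.1 y.2 hx hy
  simp only [hopfH, antipodal, Sp2Set, Set.mem_setOf_eq, Prod.mk.injEq]
  constructor
  · rintro ⟨h1, h2⟩
    exact ⟨hx, hy, hk.1 ⟨h1, h2⟩⟩
  · rintro ⟨-, -, h3⟩
    exact hk.2 h3

lemma hopfHt_eq (x : Quaternion ℝ × Quaternion ℝ) : hopfHt x = hopfH (kConj x) := by
  simp [hopfHt, hopfH, kConj, Quaternion.norm_star, star_star]

end Sp2mAux

/-- Equivalent description of `Sp(2,m)`: for `u₁, …, u_m ∈ S⁷`,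
the conditions `h(u₁) = α h(u₂)` and `h̃(u_i) = α h(u_{i+1})` for `2 ≤ i ≤ m−1`
hold iff `(u₁,u₂) ∈ Sp(2)` and `(k u_i, u_{i+1}) ∈ Sp(2)` for `2 ≤ i ≤ m−1`. -/
theorem sp2m_equivalent_description (m : ℕ) (hm : 3 ≤ m)
    (u : ℕ → Quaternion ℝ × Quaternion ℝ)
    (hu : ∀ i, 1 ≤ i → i ≤ m → ‖(u i).1‖ ^ 2 + ‖(u i).2‖ ^ 2 = 1) :
    (hopfH (u 1) = antipodal (hopfH (u 2)) ∧
      ∀ i, 2 ≤ i → i ≤ m - 1 → hopfHt (u i) = antipodal (hopfH (u (i + 1)))) ↔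
    ((u 1, u 2) ∈ Sp2Set ∧
      ∀ i, 2 ≤ i → i ≤ m - 1 → (kConj (u i), u (i + 1)) ∈ Sp2Set) := by
  have h12 := Sp2mAux.main_pair (u 1) (u 2)
    (hu 1 le_rfl (by omega)) (hu 2 (by omega) (by omega))
  apply and_congr h12
  apply forall_congr'
  intro i
  constructor
  · intro h h2 hm1
    have hki : ‖(kConj (u i)).1‖ ^ 2 + ‖(kConj (u i)).2‖ ^ 2 = 1 := by
      simpa [kConj, Quaternion.norm_star] using hu i (by omega) (by omega)
    exact (Sp2mAux.main_pair (kConj (u i)) (u (i + 1)) hki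
      (hu (i + 1) (by omega) (by omega))).1
      (by rw [← Sp2mAux.hopfHt_eq]; exact h h2 hm1)
  · intro h h2 hm1
    have hki : ‖(kConj (u i)).1‖ ^ 2 + ‖(kConj (u i)).2‖ ^ 2 = 1 := by
      simpa [kConj, Quaternion.norm_star] using hu i (by omega) (by omega)
    rw [Sp2mAux.hopfHt_eq]
    exact (Sp2mAux.main_pair (kConj (u i)) (u (i + 1)) hki
      (hu (i + 1) (by omega) (by omega))).2 (h h2 hm1)
end

section
/- The (S³)³-action on Sp(2,3) is well defined and free: if (u₁,u₂,u₃) ∈ Sp(2,3) (i.e. u₁,u₂,u₃ ∈ S⁷, h(u₁) = α h(u₂) and h̃(u₂) = α h(u₃)) and q₁,q₂,q₃ are unit quaternions, then (u₁ q̄₁, u₂ q̄₂, q₂ u₃ q̄₃) ∈ Sp(2,3), where multiplication of an element of ℍ×ℍ by quaternions is componentwise; moreover, if (u₁ q̄₁, u₂ q̄₂, q₂ u₃ q̄₃) = (u₁,u₂,u₃) then q₁ = q₂ = q₃ = 1. -/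
/-- Componentwise right multiplication of `u ∈ ℍ × ℍ` by a quaternion. -/
noncomputable def rmul (u : Quaternion ℝ × Quaternion ℝ) (q : Quaternion ℝ) :
    Quaternion ℝ × Quaternion ℝ := (u.1 * q, u.2 * q)

/-- Componentwise left multiplication of `u ∈ ℍ × ℍ` by a quaternion. -/
noncomputable def lmul (q : Quaternion ℝ) (u : Quaternion ℝ × Quaternion ℝ) :
    Quaternion ℝ × Quaternion ℝ := (q * u.1, q * u.2)

/-- Membership in `S⁷ ⊂ ℍ × ℍ`. -/
def memS7 (u : Quaternion ℝ × Quaternion ℝ) : Prop := ‖u.1‖ ^ 2 + ‖u.2‖ ^ 2 = 1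

lemma unit_star_mul (q : Quaternion ℝ) (h : ‖q‖ = 1) : star q * q = 1 := by
  rw [Quaternion.star_mul_self]
  have : Quaternion.normSq q = 1 := by
    have := Quaternion.normSq_eq_norm_mul_self (a := q)
    simp [this, h]
  simp [this]

lemma unit_mul_star (q : Quaternion ℝ) (h : ‖q‖ = 1) : q * star q = 1 := by
  rw [Quaternion.self_mul_star]
  have : Quaternion.normSq q = 1 := by
    have := Quaternion.normSq_eq_norm_mul_self (a := q)
    simp [this, h]
  simp [this]

lemma L1 (a b q : Quaternion ℝ) (h : star q * q = 1) :
    a * star q * star (b * star q) = a * star b := by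
  have key : ∀ x : Quaternion ℝ, star q * (q * x) = x := fun x => by
    rw [← mul_assoc, h, one_mul]
  simp [star_mul, star_star, mul_assoc, key]

lemma L2 (a b q : Quaternion ℝ) :
    star (a * star q) * (b * star q) = q * (star a * b) * star q := by
  simp [star_mul, star_star, mul_assoc]

lemma L3 (a b q r : Quaternion ℝ) (hr : star r * r = 1) :
    q * (a * star r) * star (q * (b * star r)) = q * (a * star b) * star q := by
  have key : ∀ x : Quaternion ℝ, star r * (r * x) = x := fun x => by
    rw [← mul_assoc, hr, one_mul]
  simp [star_mul, star_star, mul_assoc, key]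

lemma fix_right (u : Quaternion ℝ × Quaternion ℝ) (hu : memS7 u) (q : Quaternion ℝ)
    (h1 : u.1 * star q = u.1) (h2 : u.2 * star q = u.2) : q = 1 := by
  have hne : u.1 ≠ 0 ∨ u.2 ≠ 0 := by
    by_contra h
    push_neg at h
    rw [memS7, h.1, h.2] at hu
    simp at hu
  have hsq : star q = 1 := by
    rcases hne with h | h
    · exact mul_left_cancel₀ h (by rw [h1, mul_one])
    · exact mul_left_cancel₀ h (by rw [h2, mul_one])
  calc q = star (star q) := (star_star q).symm
    _ = 1 := by rw [hsq, star_one]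

/-- The `(S³)³`-action
`(q₁,q₂,q₃)·(u₁,u₂,u₃) = (u₁ q̄₁, u₂ q̄₂, q₂ u₃ q̄₃)` on `Sp(2,3)` is well
defined and free. -/
theorem sp23_action_well_defined_and_free
    (u₁ u₂ u₃ : Quaternion ℝ × Quaternion ℝ)
    (h₁ : memS7 u₁) (h₂ : memS7 u₂) (h₃ : memS7 u₃)
    (hh : hopfH u₁ = antipodal (hopfH u₂))
    (hht : hopfHt u₂ = antipodal (hopfH u₃))
    (q₁ q₂ q₃ : Quaternion ℝ)
    (hq₁ : ‖q₁‖ = 1) (hq₂ : ‖q₂‖ = 1) (hq₃ : ‖q₃‖ = 1) :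
    (memS7 (rmul u₁ (star q₁)) ∧ memS7 (rmul u₂ (star q₂)) ∧
     memS7 (lmul q₂ (rmul u₃ (star q₃))) ∧
     hopfH (rmul u₁ (star q₁)) = antipodal (hopfH (rmul u₂ (star q₂))) ∧
     hopfHt (rmul u₂ (star q₂)) = antipodal (hopfH (lmul q₂ (rmul u₃ (star q₃))))) ∧
    ((rmul u₁ (star q₁) = u₁ ∧ rmul u₂ (star q₂) = u₂ ∧
      lmul q₂ (rmul u₃ (star q₃)) = u₃) → q₁ = 1 ∧ q₂ = 1 ∧ q₃ = 1) := by
  have s₁ := unit_star_mul q₁ hq₁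
  have s₂ := unit_star_mul q₂ hq₂
  have s₃ := unit_star_mul q₃ hq₃
  have hhP := Prod.ext_iff.mp hh
  have hhtP := Prod.ext_iff.mp hht
  simp only [hopfH, hopfHt, antipodal] at hhP hhtP
  constructor
  · refine ⟨?_, ?_, ?_, ?_, ?_⟩
    · simpa [memS7, rmul, norm_mul, norm_star, hq₁] using h₁
    · simpa [memS7, rmul, norm_mul, norm_star, hq₂] using h₂
    · simpa [memS7, rmul, lmul, norm_mul, norm_star, hq₂, hq₃] using h₃
    · apply Prod.ext
      · simpa [hopfH, antipodal, rmul, norm_mul, norm_star, hq₁, hq₂] using hhP.1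
      · simp only [hopfH, antipodal, rmul, L1 _ _ _ s₁, L1 _ _ _ s₂]
        exact hhP.2
    · apply Prod.ext
      · simpa [hopfHt, hopfH, antipodal, rmul, lmul, norm_mul, norm_star, hq₂, hq₃]
          using hhtP.1
      · simp only [hopfHt, hopfH, antipodal, rmul, lmul, L2, L3 _ _ _ _ s₃]
        have : 2 * (q₂ * (star u₂.1 * u₂.2) * star q₂) =
            q₂ * (2 * (star u₂.1 * u₂.2)) * star q₂ := by noncomm_ring
        rw [this, hhtP.2]
        noncomm_ring
  · rintro ⟨f₁, f₂, f₃⟩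
    have e₁ := Prod.ext_iff.mp f₁
    have e₂ := Prod.ext_iff.mp f₂
    simp only [rmul] at e₁ e₂
    have hq1 : q₁ = 1 := fix_right u₁ h₁ q₁ e₁.1 e₁.2
    have hq2 : q₂ = 1 := fix_right u₂ h₂ q₂ e₂.1 e₂.2
    subst hq2
    have e₃ := Prod.ext_iff.mp f₃
    simp only [lmul, rmul, one_mul] at e₃
    exact ⟨hq1, rfl, fix_right u₃ h₃ q₃ e₃.1 e₃.2⟩
end

section
/- The bundle Sp(2)×_{pr₂=pr₁}Sp(2) → Sp(2) is trivial via an explicit map: the map Φ from Sp(2) × S³ to {(Q₁,Q₂) ∈ Sp(2)×Sp(2) : pr₂(Q₁) = pr₁(Q₂)}, defined by Φ((u,v), q) = ((u,v), (v, u·q)) where u·q denotes componentwise right multiplication of u ∈ ℍ×ℍ by the unit quaternion q, is well defined (in particular (v, u·q) ∈ Sp(2) whenever (u,v) ∈ Sp(2)) and is a homeomorphism onto {(Q₁,Q₂) ∈ Sp(2)×Sp(2) : pr₂(Q₁) = pr₁(Q₂)} with its subspace topology. -/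
/-- The unit quaternions `S³ ⊂ ℍ`. -/
def S3 : Type := {q : Quaternion ℝ // ‖q‖ = 1}

noncomputable instance : TopologicalSpace S3 := by unfold S3; infer_instance

/-- The total space of the bundle `Sp(2) ×_{pr₂ = pr₁} Sp(2) → Sp(2)`:
pairs of elements of `Sp(2)` such that the second column of the first equals
the first column of the second. -/
def FiberProd : Type :=
  {P : ↥Sp2Set × ↥Sp2Set // P.1.val.2 = P.2.val.1}

noncomputable instance : TopologicalSpace FiberProd := by unfold FiberProd; infer_instance

local notation "𝕳" => Quaternion ℝ

lemma coe_norm_sq (a : 𝕳) : a * star a = ((‖a‖^2 : ℝ) : 𝕳) := by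
  rw [Quaternion.self_mul_star, Quaternion.normSq_eq_norm_mul_self, sq]

lemma star_coe_norm_sq (a : 𝕳) : star a * a = ((‖a‖^2 : ℝ) : 𝕳) := by
  rw [Quaternion.star_mul_self, Quaternion.normSq_eq_norm_mul_self, sq]

lemma key (a b c d : 𝕳) (h1 : ‖a‖^2+‖b‖^2 = 1) (h2 : ‖c‖^2+‖d‖^2 = 1)
    (h3 : star a * c + star b * d = 0) :
    a * star a + c * star c = 1 ∧ b * star b + d * star d = 1 ∧
    a * star b + c * star d = 0 := by
  have h5 : star a * c = -(star b * d) := eq_neg_of_add_eq_zero_left h3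
  have hnorm : ‖a‖ * ‖c‖ = ‖b‖ * ‖d‖ := by
    have := congrArg norm h5
    simpa [norm_mul, norm_star, norm_neg] using this
  have h4 : ‖a‖^2 * ‖c‖^2 = ‖b‖^2 * ‖d‖^2 := by
    rw [← mul_pow, ← mul_pow, hnorm]
  have hcb : ‖c‖^2 = ‖b‖^2 := by nlinarith [norm_nonneg a, norm_nonneg b, norm_nonneg c, norm_nonneg d]
  have hda : ‖d‖^2 = ‖a‖^2 := by nlinarith
  refine ⟨?_, ?_, ?_⟩
  · rw [coe_norm_sq, coe_norm_sq, ← Quaternion.coe_add, hcb, h1, Quaternion.coe_one]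
  · rw [coe_norm_sq, coe_norm_sq, ← Quaternion.coe_add, hda, add_comm (‖b‖^2), h1, Quaternion.coe_one]
  · rcases eq_or_ne a 0 with ha | ha
    · have hd : d = 0 := by
        have : ‖d‖^2 = 0 := by rw [hda, ha]; simp
        simpa using pow_eq_zero_iff (n := 2) (by norm_num) |>.mp this
      simp [ha, hd]
    · have h6 : a * (star a * c) * star d = a * -(star b * d) * star d := by rw [h5]
      have h7 : ((‖a‖^2 : ℝ) : 𝕳) * (c * star d) = -(((‖a‖^2 : ℝ) : 𝕳) * (a * star b)) := by
        calc ((‖a‖^2:ℝ):𝕳) * (c * star d) = a * (star a * c) * star d := by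
              rw [← coe_norm_sq]; noncomm_ring
          _ = a * -(star b * d) * star d := h6
          _ = -((a * star b) * (d * star d)) := by noncomm_ring
          _ = -((a * star b) * ((‖d‖^2:ℝ):𝕳)) := by rw [coe_norm_sq]
          _ = -(((‖a‖^2:ℝ):𝕳) * (a * star b)) := by
              rw [hda, Quaternion.coe_commutes]
      have hne : ((‖a‖^2 : ℝ) : 𝕳) ≠ 0 := by
        rw [ne_eq, ← Quaternion.coe_zero, Quaternion.coe_inj]
        exact pow_ne_zero 2 (norm_ne_zero_iff.mpr ha)
      rw [← mul_neg] at h7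
      have h8 := mul_left_cancel₀ hne h7
      rw [h8]; simp

/-- well-definedness -/
lemma wd : ∀ u v : Quaternion ℝ × Quaternion ℝ, (u, v) ∈ Sp2Set →
    ∀ q : Quaternion ℝ, ‖q‖ = 1 → (v, (u.1 * q, u.2 * q)) ∈ Sp2Set := by
  rintro ⟨a, b⟩ ⟨c, d⟩ ⟨h1, h2, h3⟩ q hq
  refine ⟨h2, ?_, ?_⟩
  · simp only [norm_mul, hq, mul_one]
    exact h1
  · have horth : star c * a + star d * b = 0 := by
      have := congrArg star h3
      simpa [star_add, star_mul] using this
    calc star c * (a * q) + star d * (b * q)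
        = (star c * a + star d * b) * q := by noncomm_ring
      _ = 0 := by rw [horth, zero_mul]

lemma recover_q (a b q : 𝕳) (h1 : ‖a‖^2 + ‖b‖^2 = 1) :
    star a * (a * q) + star b * (b * q) = q := by
  calc star a * (a * q) + star b * (b * q)
      = (star a * a + star b * b) * q := by noncomm_ring
    _ = ((1:ℝ):𝕳) * q := by
        rw [star_coe_norm_sq, star_coe_norm_sq, ← Quaternion.coe_add, h1]
    _ = q := by rw [Quaternion.coe_one, one_mul]

lemma recover (a b c d e f : 𝕳)
    (hP : ((a, b), (c, d)) ∈ Sp2Set) (hQ : ((c, d), (e, f)) ∈ Sp2Set) :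
    e = a * (star a * e + star b * f) ∧ f = b * (star a * e + star b * f) ∧
    ‖star a * e + star b * f‖ = 1 := by
  obtain ⟨h1, h2, h3⟩ := hP
  obtain ⟨_, h2', h3'⟩ := hQ
  simp only at h1 h2 h3 h2' h3'
  obtain ⟨R1, R2, R3⟩ := key a b c d h1 h2 h3
  have ha' : a * star a = 1 - c * star c := eq_sub_of_add_eq R1
  have hb' : a * star b = -(c * star d) := eq_neg_of_add_eq_zero_left R3
  have hba : b * star a = -(d * star c) := by
    have := congrArg star hb'
    simpa [star_mul, star_neg] using this
  have hbb : b * star b = 1 - d * star d := eq_sub_of_add_eq R2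
  have he : a * (star a * e + star b * f) = e := by
    calc a * (star a * e + star b * f)
        = (a * star a) * e + (a * star b) * f := by noncomm_ring
      _ = (1 - c * star c) * e + (-(c * star d)) * f := by rw [ha', hb']
      _ = e - c * (star c * e + star d * f) := by noncomm_ring
      _ = e := by rw [h3', mul_zero, sub_zero]
  have hf : b * (star a * e + star b * f) = f := by
    calc b * (star a * e + star b * f)
        = (b * star a) * e + (b * star b) * f := by noncomm_ring
      _ = (-(d * star c)) * e + (1 - d * star d) * f := by rw [hba, hbb]
      _ = f - d * (star c * e + star d * f) := by noncomm_ring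
      _ = f := by rw [h3', mul_zero, sub_zero]
  refine ⟨he.symm, hf.symm, ?_⟩
  set q := star a * e + star b * f with hqdef
  have hnorm : ‖e‖^2 + ‖f‖^2 = (‖a‖^2 + ‖b‖^2) * ‖q‖^2 := by
    rw [← he, ← hf, norm_mul, norm_mul]; ring
  rw [h1, one_mul, h2'] at hnorm
  nlinarith [norm_nonneg q]

/-- The map `Φ((u,v), q) = ((u,v), (v, u·q))` is well defined
(in particular `(v, u·q) ∈ Sp(2)` whenever `(u,v) ∈ Sp(2)` and `‖q‖ = 1`) and
is a homeomorphism from `Sp(2) × S³` onto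
`{(Q₁,Q₂) ∈ Sp(2) × Sp(2) : pr₂(Q₁) = pr₁(Q₂)}`; i.e. the bundle
`Sp(2) ×_{pr₂ = pr₁} Sp(2) → Sp(2)` is trivial via an explicit map. -/
theorem sp2_fiber_product_trivial :
    (∀ u v : Quaternion ℝ × Quaternion ℝ, (u, v) ∈ Sp2Set →
      ∀ q : Quaternion ℝ, ‖q‖ = 1 → (v, (u.1 * q, u.2 * q)) ∈ Sp2Set) ∧
    ∃ Φ : (↥Sp2Set × S3) ≃ₜ FiberProd,
      ∀ (P : ↥Sp2Set) (q : S3),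
        (Φ (P, q)).val.1.val = P.val ∧
        (Φ (P, q)).val.2.val = (P.val.2, (P.val.1.1 * q.val, P.val.1.2 * q.val)) := by
  refine ⟨wd, ?_⟩
  have memP : ∀ P : ↥Sp2Set, (P.val.1, P.val.2) ∈ Sp2Set := fun P => by
    simpa using P.prop
  refine ⟨{
    toFun := fun x =>
      ⟨(x.1, ⟨(x.1.val.2, (x.1.val.1.1 * x.2.val, x.1.val.1.2 * x.2.val)),
        wd x.1.val.1 x.1.val.2 (memP x.1) x.2.val x.2.prop⟩), rfl⟩
    invFun := fun X =>
      (X.val.1, ⟨star X.val.1.val.1.1 * X.val.2.val.2.1 +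
                 star X.val.1.val.1.2 * X.val.2.val.2.2, by
        have hP : ((X.val.1.val.1.1, X.val.1.val.1.2), (X.val.1.val.2.1, X.val.1.val.2.2)) ∈ Sp2Set := by
          simpa using X.val.1.prop
        have hQ : ((X.val.1.val.2.1, X.val.1.val.2.2), (X.val.2.val.2.1, X.val.2.val.2.2)) ∈ Sp2Set := by
          have h := X.val.2.prop
          have e1 : X.val.2.val.1.1 = X.val.1.val.2.1 := by rw [← X.prop]
          have e2 : X.val.2.val.1.2 = X.val.1.val.2.2 := by rw [← X.prop]
          rw [← e1, ← e2]
          simpa using h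
        exact (recover _ _ _ _ _ _ hP hQ).2.2⟩)
    left_inv := fun x => by
      refine Prod.ext rfl (Subtype.ext ?_)
      exact recover_q _ _ _ (memP x.1).1
    right_inv := fun X => by
      have hP : ((X.val.1.val.1.1, X.val.1.val.1.2), (X.val.1.val.2.1, X.val.1.val.2.2)) ∈ Sp2Set := by
        simpa using X.val.1.prop
      have hQ : ((X.val.1.val.2.1, X.val.1.val.2.2), (X.val.2.val.2.1, X.val.2.val.2.2)) ∈ Sp2Set := by
        have h := X.val.2.prop
        have e1 : X.val.2.val.1.1 = X.val.1.val.2.1 := by rw [← X.prop]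
        have e2 : X.val.2.val.1.2 = X.val.1.val.2.2 := by rw [← X.prop]
        rw [← e1, ← e2]
        simpa using h
      obtain ⟨he, hf, _⟩ := recover _ _ _ _ _ _ hP hQ
      refine Subtype.ext (Prod.ext rfl (Subtype.ext ?_))
      refine Prod.ext X.prop (Prod.ext he.symm hf.symm)
    continuous_toFun := by
      apply Continuous.subtype_mk
      apply Continuous.prodMk continuous_fst
      apply Continuous.subtype_mk
      apply Continuous.prodMk
      · exact ((continuous_subtype_val.comp continuous_fst).snd)
      · apply Continuous.prodMk
        · exact (((continuous_subtype_val.comp continuous_fst).fst.fst).mul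
            (continuous_subtype_val.comp continuous_snd))
        · exact (((continuous_subtype_val.comp continuous_fst).fst.snd).mul
            (continuous_subtype_val.comp continuous_snd))
    continuous_invFun := by
      apply Continuous.prodMk
      · exact continuous_fst.comp continuous_subtype_val
      · apply Continuous.subtype_mk
        have h1 : Continuous fun X : FiberProd => X.val.1.val.1.1 :=
          (continuous_subtype_val.comp (continuous_fst.comp continuous_subtype_val)).fst.fst
        have h2 : Continuous fun X : FiberProd => X.val.1.val.1.2 :=
          (continuous_subtype_val.comp (continuous_fst.comp continuous_subtype_val)).fst.snd
        have h3 : Continuous fun X : FiberProd => X.val.2.val.2.1 :=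
          (continuous_subtype_val.comp (continuous_snd.comp continuous_subtype_val)).snd.fst
        have h4 : Continuous fun X : FiberProd => X.val.2.val.2.2 :=
          (continuous_subtype_val.comp (continuous_snd.comp continuous_subtype_val)).snd.snd
        exact ((h1.star.mul h3).add (h2.star.mul h4)) }, ?_⟩
  intro P q
  exact ⟨rfl, rfl⟩
end

section
/- There exists a continuous map F : Sp(2) → Sp(2) such that for every (u,v) ∈ Sp(2) one has pr₁(F(u,v)) = k(v), where k is componentwise quaternionic conjugation; that is, the first column of F(Q) equals the conjugate of the second column of Q, so (Q, F(Q)) belongs to Sp(2,3)' = {(Q₁,Q₂) ∈ Sp(2)×Sp(2) : k(pr₂(Q₁)) = pr₁(Q₂)} for every Q ∈ Sp(2). -/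
namespace Sp2Aux

open Quaternion

noncomputable section

/-- In a finite-dimensional algebra, one-sided inverses are two-sided. -/
private lemma fd_mul_eq_one_comm {A : Type} [Ring A] [Algebra ℝ A] [FiniteDimensional ℝ A]
    {x y : A} (h : x * y = 1) : y * x = 1 := by
  have hinj : Function.Injective (LinearMap.mulLeft ℝ y) := by
    intro u v huv
    have h2 : y * u = y * v := huv
    have : x * (y * u) = x * (y * v) := by rw [h2]
    simpa [← mul_assoc, h] using this
  obtain ⟨z, hz⟩ := (LinearMap.injective_iff_surjective.mp hinj) 1
  have hz' : y * z = 1 := hz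
  have hxz : x = z := by
    calc x = x * (y * z) := by rw [hz', mul_one]
    _ = (x * y) * z := by rw [mul_assoc]
    _ = z := by rw [h, one_mul]
  rw [hxz]; exact hz'

abbrev V2 : Type := (Quaternion ℝ) × (Quaternion ℝ)

/-- quaternionic hermitian inner product on `ℍ²` -/
def inn (u v : V2) : Quaternion ℝ := star u.1 * v.1 + star u.2 * v.2

/-- right scalar multiplication -/
def srm (v : V2) (r : Quaternion ℝ) : V2 := (v.1 * r, v.2 * r)

lemma star_inn (u v : V2) : star (inn u v) = inn v u := by
  simp [inn, add_comm, mul_comm]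

lemma inn_sr_right (u v : V2) (r : Quaternion ℝ) : inn u (srm v r) = inn u v * r := by
  simp [inn, srm, mul_assoc, add_mul]

lemma inn_sr_left (u v : V2) (r : Quaternion ℝ) : inn (srm u r) v = star r * inn u v := by
  simp [inn, srm, StarMul.star_mul, mul_assoc, mul_add]

lemma inn_add_right (u v w : V2) : inn u (v + w) = inn u v + inn u w := by
  simp [inn, mul_add]; abel

lemma inn_sub_right (u v w : V2) : inn u (v - w) = inn u v - inn u w := by
  simp [inn, mul_sub]; abel

lemma inn_sub_left (u v w : V2) : inn (u - v) w = inn u w - inn v w := by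
  simp [inn, sub_mul]; abel

lemma inn_smul_left (r : ℝ) (u v : V2) : inn (r • u) v = r • inn u v := by
  simp [inn, Prod.smul_fst, Prod.smul_snd, Quaternion.star_smul, smul_mul_assoc, smul_add]

lemma inn_smul_right (r : ℝ) (u v : V2) : inn u (r • v) = r • inn u v := by
  simp [inn, Prod.smul_fst, Prod.smul_snd, mul_smul_comm, smul_add]

lemma inn_self_coe (w : V2) : inn w w = ((normSq w.1 + normSq w.2 : ℝ) : Quaternion ℝ) := by
  simp [inn, star_mul_self]

/-- completeness of an orthonormal pair in `ℍ²` -/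
lemma complete {p v : V2} (hp : inn p p = 1) (hv : inn v v = 1) (hpv : inn p v = 0)
    (q : V2) : srm p (inn p q) + srm v (inn v q) = q := by
  have hvp : inn v p = 0 := by rw [← star_inn, hpv, star_zero]
  set W : Matrix (Fin 2) (Fin 2) (Quaternion ℝ) := !![p.1, v.1; p.2, v.2] with hW
  set W' : Matrix (Fin 2) (Fin 2) (Quaternion ℝ) := !![star p.1, star p.2; star v.1, star v.2]
    with hW'
  have h1 : W' * W = 1 := by
    rw [hW, hW', Matrix.mul_fin_two, Matrix.one_fin_two]
    have e1 : star p.1 * p.1 + star p.2 * p.2 = 1 := hp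
    have e2 : star p.1 * v.1 + star p.2 * v.2 = 0 := hpv
    have e3 : star v.1 * p.1 + star v.2 * p.2 = 0 := hvp
    have e4 : star v.1 * v.1 + star v.2 * v.2 = 1 := hv
    congr 1 <;> simp_all
  have h2 : W * W' = 1 := fd_mul_eq_one_comm h1
  rw [hW, hW', Matrix.mul_fin_two, Matrix.one_fin_two] at h2
  have e11 : p.1 * star p.1 + v.1 * star v.1 = 1 := by
    have := congrFun (congrFun h2 0) 0; simpa using this
  have e12 : p.1 * star p.2 + v.1 * star v.2 = 0 := by
    have := congrFun (congrFun h2 0) 1; simpa using this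
  have e21 : p.2 * star p.1 + v.2 * star v.1 = 0 := by
    have := congrFun (congrFun h2 1) 0; simpa using this
  have e22 : p.2 * star p.2 + v.2 * star v.2 = 1 := by
    have := congrFun (congrFun h2 1) 1; simpa using this
  have hc1 : p.1 * (inn p q) + v.1 * (inn v q)
      = (p.1 * star p.1 + v.1 * star v.1) * q.1 + (p.1 * star p.2 + v.1 * star v.2) * q.2 := by
    simp only [inn]; noncomm_ring
  have hc2 : p.2 * (inn p q) + v.2 * (inn v q)
      = (p.2 * star p.1 + v.2 * star v.1) * q.1 + (p.2 * star p.2 + v.2 * star v.2) * q.2 := by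
    simp only [inn]; noncomm_ring
  have hfin : srm p (inn p q) + srm v (inn v q)
      = (p.1 * (inn p q) + v.1 * (inn v q), p.2 * (inn p q) + v.2 * (inn v q)) := rfl
  rw [hfin, hc1, hc2, e11, e12, e21, e22]
  simp

/-- The step isometry sending `p` exactly to `q`. -/
def Ustep (p q x : V2) : V2 :=
  srm q (inn p x) +
    (‖inn p q‖⁻¹ : ℝ) • (x - srm p (inn p x) - srm q (inn q x - inn q p * inn p x))

lemma srm_one (v : V2) : srm v 1 = v := by simp [srm]
lemma srm_zero (v : V2) : srm v 0 = 0 := by simp [srm]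

lemma Ustep_fst {p q : V2} (hp : inn p p = 1) : Ustep p q p = q := by
  simp [Ustep, hp, srm_one, srm_zero]

lemma Ustep_perp {p q v : V2} (hpv : inn p v = 0) :
    Ustep p q v = (‖inn p q‖⁻¹ : ℝ) • (v - srm q (inn q v)) := by
  simp [Ustep, hpv, srm_zero]

lemma inn_q_Ustep {p q v : V2} (hq : inn q q = 1) (hpv : inn p v = 0) :
    inn q (Ustep p q v) = 0 := by
  rw [Ustep_perp hpv, inn_smul_right, inn_sub_right, inn_sr_right, hq, one_mul, sub_self,
    smul_zero]

/-- Pythagoras via completeness -/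
lemma pyth {p v q : V2} (hp : inn p p = 1) (hq : inn q q = 1) (hv : inn v v = 1)
    (hpv : inn p v = 0) :
    star (inn q v) * inn q v = 1 - star (inn p q) * inn p q := by
  have hc := complete hp hv hpv q
  have h1 := congrArg (fun w => inn q w) hc
  simp only [inn_add_right, inn_sr_right] at h1
  rw [← star_inn p q, ← star_inn v q] at h1
  have h2 : star (inn q v) * inn q v = star (inn v q) * inn v q := by
    rw [← star_inn v q, star_star]
    rw [show star (inn v q) * inn v q = ((normSq (inn v q) : ℝ) : Quaternion ℝ) from
      Quaternion.star_mul_self _]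
    rw [show inn v q * star (inn v q) = ((normSq (inn v q) : ℝ) : Quaternion ℝ) from
      Quaternion.self_mul_star _]
  rw [h2, eq_sub_iff_add_eq, add_comm, h1, hq]

lemma Ustep_unit {p q v : V2} (hp : inn p p = 1) (hq : inn q q = 1) (hv : inn v v = 1)
    (hpv : inn p v = 0) (hpq : inn p q ≠ 0) :
    inn (Ustep p q v) (Ustep p q v) = 1 := by
  set t := inn q v with ht
  have e1 : inn v (srm q t) = star t * t := by
    rw [inn_sr_right, ← star_inn q v, ← ht]
  have e2 : inn (srm q t) v = star t * t := by rw [inn_sr_left, ← ht]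
  have e3 : inn (srm q t) (srm q t) = star t * t := by
    rw [inn_sr_left, inn_sr_right, hq, one_mul]
  have hexp : inn (v - srm q t) (v - srm q t) = 1 - star t * t := by
    rw [inn_sub_right, inn_sub_left, inn_sub_left, hv, e1, e2, e3]
    abel
  have hpyth := pyth hp hq hv hpv
  have hval : inn (v - srm q t) (v - srm q t)
      = ((‖inn p q‖ * ‖inn p q‖ : ℝ) : Quaternion ℝ) := by
    rw [hexp, ht, hpyth, ← Quaternion.normSq_eq_norm_mul_self]
    rw [show star (inn p q) * inn p q = ((normSq (inn p q) : ℝ) : Quaternion ℝ) from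
      Quaternion.star_mul_self _]
    simp
  have hne : (‖inn p q‖ : ℝ) ≠ 0 := norm_ne_zero_iff.mpr hpq
  rw [Ustep_perp hpv, inn_smul_left, inn_smul_right, hval, Quaternion.smul_coe,
    Quaternion.smul_coe]
  rw [show ‖inn p q‖⁻¹ * (‖inn p q‖⁻¹ * (‖inn p q‖ * ‖inn p q‖)) = 1 by field_simp]
  simp

/-- rotation by the angle `α` with `cos α = 3/5` in three coordinate 2-planes of `ℍ²` -/
def rot1 (w : V2) : V2 :=
  (⟨w.1.re, (3/5)*w.1.imI - (4/5)*w.1.imJ, (4/5)*w.1.imI + (3/5)*w.1.imJ,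
      (3/5)*w.1.imK - (4/5)*w.2.imI⟩,
   ⟨w.2.re, (4/5)*w.1.imK + (3/5)*w.2.imI, (3/5)*w.2.imJ - (4/5)*w.2.imK,
      (4/5)*w.2.imJ + (3/5)*w.2.imK⟩)

/-- rotation by `2α`, with `cos 2α = -7/25`, `sin 2α = 24/25` -/
def rot2 (w : V2) : V2 :=
  (⟨w.1.re, (-7/25)*w.1.imI - (24/25)*w.1.imJ, (24/25)*w.1.imI + (-7/25)*w.1.imJ,
      (-7/25)*w.1.imK - (24/25)*w.2.imI⟩,
   ⟨w.2.re, (24/25)*w.1.imK + (-7/25)*w.2.imI, (-7/25)*w.2.imJ - (24/25)*w.2.imK,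
      (24/25)*w.2.imJ + (-7/25)*w.2.imK⟩)

lemma inn_re (u v : V2) : (inn u v).re =
    u.1.re*v.1.re + u.1.imI*v.1.imI + u.1.imJ*v.1.imJ + u.1.imK*v.1.imK +
    (u.2.re*v.2.re + u.2.imI*v.2.imI + u.2.imJ*v.2.imJ + u.2.imK*v.2.imK) := by
  simp [inn, Quaternion.re_mul]

lemma unit_comps {w : V2} (hw : inn w w = 1) :
    w.1.re^2 + w.1.imI^2 + w.1.imJ^2 + w.1.imK^2 +
      (w.2.re^2 + w.2.imI^2 + w.2.imJ^2 + w.2.imK^2) = 1 := by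
  rw [inn_self_coe] at hw
  have h : (normSq w.1 + normSq w.2 : ℝ) = 1 := Quaternion.coe_injective (by simp [hw])
  rw [Quaternion.normSq_def', Quaternion.normSq_def'] at h
  linarith [h]

lemma comps_unit {w : V2}
    (h : w.1.re^2 + w.1.imI^2 + w.1.imJ^2 + w.1.imK^2 +
      (w.2.re^2 + w.2.imI^2 + w.2.imJ^2 + w.2.imK^2) = 1) : inn w w = 1 := by
  rw [inn_self_coe]
  have h' : (normSq w.1 + normSq w.2 : ℝ) = 1 := by
    rw [Quaternion.normSq_def', Quaternion.normSq_def']; linarith [h]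
  rw [h']; simp

lemma rot1_unit {w : V2} (hw : inn w w = 1) : inn (rot1 w) (rot1 w) = 1 := by
  have h := unit_comps hw
  apply comps_unit
  simp only [rot1]
  ring_nf
  ring_nf at h
  linarith [h]

lemma rot2_unit {w : V2} (hw : inn w w = 1) : inn (rot2 w) (rot2 w) = 1 := by
  have h := unit_comps hw
  apply comps_unit
  simp only [rot2]
  ring_nf
  ring_nf at h
  linarith [h]

lemma kConj_unit {w : V2} (hw : inn w w = 1) : inn (kConj w) (kConj w) = 1 := by
  have h := unit_comps hw
  apply comps_unit
  simp only [kConj, Quaternion.re_star, Quaternion.imI_star, Quaternion.imJ_star,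
    Quaternion.imK_star]
  ring_nf
  ring_nf at h
  linarith [h]

lemma re_ne_zero {x : Quaternion ℝ} (h : x.re ≠ 0) : x ≠ 0 := by
  intro h0; rw [h0] at h; simp at h

lemma inn_rot1_ne {w : V2} (hw : inn w w = 1) : inn w (rot1 w) ≠ 0 := by
  have h := unit_comps hw
  apply re_ne_zero
  rw [inn_re]
  simp only [rot1]
  intro hh
  nlinarith [h, sq_nonneg w.1.re, sq_nonneg w.2.re, hh]

lemma inn_rot12_ne {w : V2} (hw : inn w w = 1) : inn (rot1 w) (rot2 w) ≠ 0 := by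
  have h := unit_comps hw
  apply re_ne_zero
  rw [inn_re]
  simp only [rot1, rot2]
  intro hh
  nlinarith [h, sq_nonneg w.1.re, sq_nonneg w.2.re, hh]

lemma inn_rot2conj_ne {w : V2} (hw : inn w w = 1) : inn (rot2 w) (kConj w) ≠ 0 := by
  have h := unit_comps hw
  apply re_ne_zero
  rw [inn_re]
  simp only [rot2, kConj, Quaternion.re_star, Quaternion.imI_star, Quaternion.imJ_star,
    Quaternion.imK_star]
  intro hh
  nlinarith [h, sq_nonneg w.1.re, sq_nonneg w.2.re, hh]

/-- norm form to inner form -/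
lemma inn_one_of_norm {u : V2} (h : ‖u.1‖^2 + ‖u.2‖^2 = 1) : inn u u = 1 := by
  rw [inn_self_coe]
  have h' : (normSq u.1 + normSq u.2 : ℝ) = 1 := by
    rw [Quaternion.normSq_eq_norm_mul_self, Quaternion.normSq_eq_norm_mul_self,
      ← pow_two, ← pow_two]
    exact h
  rw [h']; simp

lemma norm_of_inn_one {u : V2} (h : inn u u = 1) : ‖u.1‖^2 + ‖u.2‖^2 = 1 := by
  rw [inn_self_coe] at h
  have h' : (normSq u.1 + normSq u.2 : ℝ) = 1 := Quaternion.coe_injective (by simp [h])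
  rw [Quaternion.normSq_eq_norm_mul_self, Quaternion.normSq_eq_norm_mul_self] at h'
  rw [pow_two, pow_two]
  exact h'

/-- The full map on pairs. -/
def bigF (P : V2 × V2) : V2 × V2 :=
  (kConj P.2,
    Ustep (rot2 P.2) (kConj P.2) (Ustep (rot1 P.2) (rot2 P.2) (Ustep P.2 (rot1 P.2) P.1)))

lemma bigF_mem {P : V2 × V2} (hP : P ∈ Sp2Set) : bigF P ∈ Sp2Set := by
  obtain ⟨h1, h2, h3⟩ := hP
  have hv0 : inn P.1 P.1 = 1 := inn_one_of_norm h1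
  have hz0 : inn P.2 P.2 = 1 := inn_one_of_norm h2
  have hz0v0 : inn P.2 P.1 = 0 := by
    rw [← star_inn P.1 P.2, show inn P.1 P.2 = 0 from h3, star_zero]
  have hz1 : inn (rot1 P.2) (rot1 P.2) = 1 := rot1_unit hz0
  have hz2 : inn (rot2 P.2) (rot2 P.2) = 1 := rot2_unit hz0
  have hz3 : inn (kConj P.2) (kConj P.2) = 1 := kConj_unit hz0
  have hne1 : inn P.2 (rot1 P.2) ≠ 0 := inn_rot1_ne hz0
  have hne2 : inn (rot1 P.2) (rot2 P.2) ≠ 0 := inn_rot12_ne hz0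
  have hne3 : inn (rot2 P.2) (kConj P.2) ≠ 0 := inn_rot2conj_ne hz0
  set v1 := Ustep P.2 (rot1 P.2) P.1 with hv1def
  have hv1 : inn v1 v1 = 1 := Ustep_unit hz0 hz1 hv0 hz0v0 hne1
  have hz1v1 : inn (rot1 P.2) v1 = 0 := inn_q_Ustep hz1 hz0v0
  set v2 := Ustep (rot1 P.2) (rot2 P.2) v1 with hv2def
  have hv2 : inn v2 v2 = 1 := Ustep_unit hz1 hz2 hv1 hz1v1 hne2
  have hz2v2 : inn (rot2 P.2) v2 = 0 := inn_q_Ustep hz2 hz1v1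
  set v3 := Ustep (rot2 P.2) (kConj P.2) v2 with hv3def
  have hv3 : inn v3 v3 = 1 := Ustep_unit hz2 hz3 hv2 hz2v2 hne3
  have hz3v3 : inn (kConj P.2) v3 = 0 := inn_q_Ustep hz3 hz2v2
  refine ⟨?_, ?_, ?_⟩
  · show ‖star P.2.1‖^2 + ‖star P.2.2‖^2 = 1
    rw [Quaternion.norm_star, Quaternion.norm_star]; exact h2
  · exact norm_of_inn_one hv3
  · exact hz3v3

/- Continuity lemmas -/

def qmk (w x y z : ℝ) : Quaternion ℝ := ⟨w,x,y,z⟩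

lemma mk_eq (w x y z : ℝ) : qmk w x y z =
    w • (1:Quaternion ℝ) + x • qmk 0 1 0 0 + y • qmk 0 0 1 0 + z • qmk 0 0 0 1 := by
  have h0 : ∀ a b c d : ℝ, (qmk a b c d).re = a ∧ (qmk a b c d).imI = b ∧
      (qmk a b c d).imJ = c ∧ (qmk a b c d).imK = d := fun _ _ _ _ => ⟨rfl, rfl, rfl, rfl⟩
  rw [show (1:Quaternion ℝ) = qmk 1 0 0 0 from rfl]
  ext <;> simp [h0]

lemma cont_mk {X : Type} [TopologicalSpace X] {f g h i : X → ℝ} (hf : Continuous f)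
    (hg : Continuous g) (hh : Continuous h) (hi : Continuous i) :
    Continuous (fun x => qmk (f x) (g x) (h x) (i x)) := by
  have he : (fun x => qmk (f x) (g x) (h x) (i x)) = fun x =>
      f x • (1:Quaternion ℝ) + g x • qmk 0 1 0 0 + h x • qmk 0 0 1 0 + i x • qmk 0 0 0 1 :=
    funext fun x => mk_eq _ _ _ _
  rw [he]
  exact (((hf.smul continuous_const).add (hg.smul continuous_const)).add
    (hh.smul continuous_const)).add (hi.smul continuous_const)

lemma cont_star_q : Continuous (star : Quaternion ℝ → Quaternion ℝ) := by
  have he : (star : Quaternion ℝ → Quaternion ℝ)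
      = fun q => qmk q.re (-q.imI) (-q.imJ) (-q.imK) := by
    funext q; unfold qmk; ext <;> simp
  rw [he]
  exact cont_mk Quaternion.continuous_re Quaternion.continuous_imI.neg
    Quaternion.continuous_imJ.neg Quaternion.continuous_imK.neg

lemma cont_inn {X : Type} [TopologicalSpace X] {f g : X → V2} (hf : Continuous f)
    (hg : Continuous g) : Continuous fun x => inn (f x) (g x) := by
  unfold inn
  exact ((cont_star_q.comp (continuous_fst.comp hf)).mul (continuous_fst.comp hg)).add
    ((cont_star_q.comp (continuous_snd.comp hf)).mul (continuous_snd.comp hg))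

lemma cont_srm {X : Type} [TopologicalSpace X] {f : X → V2} {g : X → Quaternion ℝ}
    (hf : Continuous f) (hg : Continuous g) : Continuous fun x => srm (f x) (g x) := by
  unfold srm
  exact ((continuous_fst.comp hf).mul hg).prodMk ((continuous_snd.comp hf).mul hg)

lemma cont_Ustep {X : Type} [TopologicalSpace X] {p q v : X → V2} (hp : Continuous p)
    (hq : Continuous q) (hv : Continuous v) (hne : ∀ x, inn (p x) (q x) ≠ 0) :
    Continuous fun x => Ustep (p x) (q x) (v x) := by
  unfold Ustep
  have hinv : Continuous fun x => (‖inn (p x) (q x)‖⁻¹ : ℝ) :=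
    ((cont_inn hp hq).norm).inv₀ fun x => norm_ne_zero_iff.mpr (hne x)
  exact (cont_srm hq (cont_inn hp hv)).add
    (hinv.smul (((hv.sub (cont_srm hp (cont_inn hp hv)))).sub
      (cont_srm hq ((cont_inn hq hv).sub ((cont_inn hq hp).mul (cont_inn hp hv))))))

lemma cont_rot1 : Continuous rot1 := by
  unfold rot1
  have r1 : Continuous fun w : V2 => w.1 := continuous_fst
  have r2 : Continuous fun w : V2 => w.2 := continuous_snd
  have c1re := Quaternion.continuous_re.comp r1
  have c1I := Quaternion.continuous_imI.comp r1
  have c1J := Quaternion.continuous_imJ.comp r1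
  have c1K := Quaternion.continuous_imK.comp r1
  have c2re := Quaternion.continuous_re.comp r2
  have c2I := Quaternion.continuous_imI.comp r2
  have c2J := Quaternion.continuous_imJ.comp r2
  have c2K := Quaternion.continuous_imK.comp r2
  exact Continuous.prodMk
    (cont_mk c1re (((continuous_const.mul c1I)).sub (continuous_const.mul c1J))
      ((continuous_const.mul c1I).add (continuous_const.mul c1J))
      ((continuous_const.mul c1K).sub (continuous_const.mul c2I)))
    (cont_mk c2re ((continuous_const.mul c1K).add (continuous_const.mul c2I))
      ((continuous_const.mul c2J).sub (continuous_const.mul c2K))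
      ((continuous_const.mul c2J).add (continuous_const.mul c2K)))

lemma cont_rot2 : Continuous rot2 := by
  unfold rot2
  have r1 : Continuous fun w : V2 => w.1 := continuous_fst
  have r2 : Continuous fun w : V2 => w.2 := continuous_snd
  have c1re := Quaternion.continuous_re.comp r1
  have c1I := Quaternion.continuous_imI.comp r1
  have c1J := Quaternion.continuous_imJ.comp r1
  have c1K := Quaternion.continuous_imK.comp r1
  have c2re := Quaternion.continuous_re.comp r2
  have c2I := Quaternion.continuous_imI.comp r2
  have c2J := Quaternion.continuous_imJ.comp r2
  have c2K := Quaternion.continuous_imK.comp r2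
  exact Continuous.prodMk
    (cont_mk c1re (((continuous_const.mul c1I)).sub (continuous_const.mul c1J))
      ((continuous_const.mul c1I).add (continuous_const.mul c1J))
      ((continuous_const.mul c1K).sub (continuous_const.mul c2I)))
    (cont_mk c2re ((continuous_const.mul c1K).add (continuous_const.mul c2I))
      ((continuous_const.mul c2J).sub (continuous_const.mul c2K))
      ((continuous_const.mul c2J).add (continuous_const.mul c2K)))

lemma cont_kConj : Continuous kConj := by
  unfold kConj
  exact (cont_star_q.comp continuous_fst).prodMk (cont_star_q.comp continuous_snd)

lemma cont_bigF_on : Continuous fun Q : ↥Sp2Set => bigF Q.val := by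
  have hval : Continuous fun Q : ↥Sp2Set => (Q.val : V2 × V2) := continuous_subtype_val
  have hc : Continuous fun Q : ↥Sp2Set => (Q.val.2 : V2) := continuous_snd.comp hval
  have ha : Continuous fun Q : ↥Sp2Set => (Q.val.1 : V2) := continuous_fst.comp hval
  have hz0unit : ∀ Q : ↥Sp2Set, inn Q.val.2 Q.val.2 = 1 := fun Q =>
    inn_one_of_norm Q.prop.2.1
  have h1 : Continuous fun Q : ↥Sp2Set => Ustep Q.val.2 (rot1 Q.val.2) Q.val.1 :=
    cont_Ustep hc (cont_rot1.comp hc) ha fun Q => inn_rot1_ne (hz0unit Q)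
  have h2 : Continuous fun Q : ↥Sp2Set =>
      Ustep (rot1 Q.val.2) (rot2 Q.val.2) (Ustep Q.val.2 (rot1 Q.val.2) Q.val.1) :=
    cont_Ustep (cont_rot1.comp hc) (cont_rot2.comp hc) h1 fun Q => inn_rot12_ne (hz0unit Q)
  have h3 : Continuous fun Q : ↥Sp2Set =>
      Ustep (rot2 Q.val.2) (kConj Q.val.2)
        (Ustep (rot1 Q.val.2) (rot2 Q.val.2) (Ustep Q.val.2 (rot1 Q.val.2) Q.val.1)) :=
    cont_Ustep (cont_rot2.comp hc) (cont_kConj.comp hc) h2 fun Q =>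
      inn_rot2conj_ne (hz0unit Q)
  exact (cont_kConj.comp hc).prodMk h3

end

end Sp2Aux

/-- There is a continuous map `F : Sp(2) → Sp(2)` whose value at
`Q = (u,v)` has first column `k(v)`, the componentwise conjugate of the second
column of `Q`; hence `(Q, F(Q))` lies in
`Sp(2,3)' = {(Q₁,Q₂) : k(pr₂ Q₁) = pr₁ Q₂}` for every `Q ∈ Sp(2)`. -/
theorem exists_continuous_F :
    ∃ F : C(↥Sp2Set, ↥Sp2Set),
      ∀ Q : ↥Sp2Set, (F Q).val.1 = kConj Q.val.2 := by
  refine ⟨⟨fun Q => ⟨Sp2Aux.bigF Q.val, Sp2Aux.bigF_mem Q.prop⟩, ?_⟩, fun Q => rfl⟩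
  exact Sp2Aux.cont_bigF_on.subtype_mk _
end
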